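/- arXiv:1202.5167 — 2 statements merged into one kernel-verified Lean document; each statement's English description precedes it below -/
import Mathlib

section
/- Let u be a C² solution of Δu + f(u) = 0 on an open set Ω ⊂ ℝ², with f of class C¹, and define P(x) = |∇u(x)|² + 2∫₀^{u(x)} f(s) ds. Then at every point of Ω where ∇u ≠ 0, P satisfies the elliptic equation ΔP + |∇u|^{-2} ⟨L, ∇P⟩ = 0, where L_i = −P_{,i} + 2 f(u) u_{,i}. -/
noncomputable section

/-- Partial derivative of `u` in the `i`-th coordinate direction. -/
def pd {n : ℕ} (u : EuclideanSpace ℝ (Fin n) → ℝ) (i : Fin n)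
    (x : EuclideanSpace ℝ (Fin n)) : ℝ :=
  fderiv ℝ u x (EuclideanSpace.single i 1)

/-- The Laplacian as the sum of second partial derivatives. -/
def lap {n : ℕ} (u : EuclideanSpace ℝ (Fin n) → ℝ) (x : EuclideanSpace ℝ (Fin n)) : ℝ :=
  ∑ i, pd (pd u i) i x

section Helpers

variable {n : ℕ} {u v g h : EuclideanSpace ℝ (Fin n) → ℝ} {x : EuclideanSpace ℝ (Fin n)}
  {i j : Fin n}

lemma pd_congr (hev : u =ᶠ[nhds x] v) : pd u i x = pd v i x := by
  unfold pd; rw [hev.fderiv_eq]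

lemma contDiffAt_pd {m : ℕ∞} (hc : ContDiffAt ℝ (m+1) u x) : ContDiffAt ℝ m (pd u i) x :=
  (hc.fderiv_right le_rfl).clm_apply contDiffAt_const

lemma contDiffAt_pd32 (hc : ContDiffAt ℝ 3 u x) : ContDiffAt ℝ 2 (pd u i) x :=
  contDiffAt_pd (m := 2) (hc.of_le (by norm_num))

lemma contDiffAt_pd21 (hc : ContDiffAt ℝ 2 u x) : ContDiffAt ℝ 1 (pd u i) x :=
  contDiffAt_pd (m := 1) (hc.of_le (by norm_num))

lemma pd_add (hg : DifferentiableAt ℝ g x) (hh : DifferentiableAt ℝ h x) :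
    pd (fun y => g y + h y) i x = pd g i x + pd h i x := by
  unfold pd; rw [fderiv_fun_add hg hh]; rfl

lemma pd_neg : pd (fun y => -(g y)) i x = -(pd g i x) := by
  unfold pd; rw [fderiv_fun_neg]; rfl

lemma pd_mul (hg : DifferentiableAt ℝ g x) (hh : DifferentiableAt ℝ h x) :
    pd (fun y => g y * h y) i x = pd g i x * h x + g x * pd h i x := by
  unfold pd; rw [fderiv_fun_mul hg hh]; simp; ring

lemma pd_const_mul (c : ℝ) (hg : DifferentiableAt ℝ g x) :
    pd (fun y => c * g y) i x = c * pd g i x := by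
  unfold pd; rw [fderiv_const_mul hg]; simp

lemma pd_sq (hg : DifferentiableAt ℝ g x) :
    pd (fun y => g y ^ 2) i x = 2 * g x * pd g i x := by
  simp only [pow_two]; rw [pd_mul hg hg]; ring

lemma pd_sum {ι : Type*} (s : Finset ι) (g : ι → EuclideanSpace ℝ (Fin n) → ℝ)
    (hg : ∀ k ∈ s, DifferentiableAt ℝ (g k) x) :
    pd (fun y => ∑ k ∈ s, g k y) i x = ∑ k ∈ s, pd (g k) i x := by
  unfold pd; rw [fderiv_fun_sum hg]; simp

lemma pd_comp {f : ℝ → ℝ} (hf : DifferentiableAt ℝ f (u x)) (hu : DifferentiableAt ℝ u x) :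
    pd (fun y => f (u y)) i x = deriv f (u x) * pd u i x := by
  have h2 := (hf.hasDerivAt.comp_hasFDerivAt x hu.hasFDerivAt).fderiv
  unfold pd
  rw [show (fun y => f (u y)) = f ∘ u from rfl, h2]; simp [mul_comm]

lemma pd_integral {f : ℝ → ℝ} (hf : Continuous f) (hu : DifferentiableAt ℝ u x) :
    pd (fun y => ∫ s in (0:ℝ)..(u y), f s) i x = f (u x) * pd u i x := by
  have h2 := (((hf.integral_hasStrictDerivAt 0 (u x)).hasDerivAt.comp_hasFDerivAt x
    hu.hasFDerivAt)).fderiv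
  unfold pd
  rw [show (fun y => ∫ s in (0:ℝ)..(u y), f s) = (fun t => ∫ s in (0:ℝ)..t, f s) ∘ u from rfl,
    h2]; simp [mul_comm]

lemma pd_comm (hc : ContDiffAt ℝ 2 u x) : pd (pd u i) j x = pd (pd u j) i x := by
  have hd : DifferentiableAt ℝ (fderiv ℝ u) x :=
    (hc.fderiv_right (m := 1) le_rfl).differentiableAt one_ne_zero
  have key : ∀ k l : Fin n, pd (pd u k) l x
      = fderiv ℝ (fderiv ℝ u) x (EuclideanSpace.single l 1) (EuclideanSpace.single k 1) := by
    intro k l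
    unfold pd
    rw [fderiv_clm_apply hd (differentiableAt_const _)]
    simp
  rw [key, key, (hc.isSymmSndFDerivAt (by simp [minSmoothness_of_isRCLikeNormedField])).eq]

end Helpers

/-- The P-function `P = |∇u|² + 2∫₀ᵘ f` of a solution of `Δu + f(u) = 0` on an open set of
`ℝ²` satisfies `ΔP + |∇u|⁻² ⟨L, ∇P⟩ = 0` wherever `∇u ≠ 0`, where
`Lᵢ = −P_{,i} + 2 f(u) u_{,i}`. -/
theorem stmt3 (Ω : Set (EuclideanSpace ℝ (Fin 2))) (hΩ : IsOpen Ω)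
    (f : ℝ → ℝ) (hf : ContDiff ℝ 1 f)
    (u : EuclideanSpace ℝ (Fin 2) → ℝ) (hu : ContDiffOn ℝ 3 u Ω)
    (heq : ∀ x ∈ Ω, lap u x + f (u x) = 0)
    (P : EuclideanSpace ℝ (Fin 2) → ℝ)
    (hP : P = fun x => (∑ i, (pd u i x) ^ 2) + 2 * ∫ s in (0:ℝ)..(u x), f s)
    (L : Fin 2 → EuclideanSpace ℝ (Fin 2) → ℝ)
    (hL : ∀ i x, L i x = -(pd P i x) + 2 * f (u x) * pd u i x) :
    ∀ x ∈ Ω, (∑ i, (pd u i x) ^ 2) ≠ 0 →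
      lap P x + (∑ i, L i x * pd P i x) / (∑ i, (pd u i x) ^ 2) = 0 := by
  intro x hx hD
  have hfd : Differentiable ℝ f := hf.differentiable one_ne_zero
  have hfc : Continuous f := hf.continuous
  have hu3 : ∀ y ∈ Ω, ContDiffAt ℝ 3 u y := fun y hy => hu.contDiffAt (hΩ.mem_nhds hy)
  have hu2 : ∀ y ∈ Ω, ContDiffAt ℝ 2 u y := fun y hy => (hu3 y hy).of_le (by norm_num)
  have hpd2 : ∀ (j : Fin 2), ∀ y ∈ Ω, ContDiffAt ℝ 2 (pd u j) y :=
    fun j y hy => contDiffAt_pd32 (hu3 y hy)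
  have du : ∀ y ∈ Ω, DifferentiableAt ℝ u y :=
    fun y hy => (hu2 y hy).differentiableAt (by norm_num)
  have dw : ∀ (j : Fin 2), ∀ y ∈ Ω, DifferentiableAt ℝ (pd u j) y :=
    fun j y hy => (hpd2 j y hy).differentiableAt (by norm_num)
  have dv : ∀ (j k : Fin 2), ∀ y ∈ Ω, DifferentiableAt ℝ (pd (pd u j) k) y :=
    fun j k y hy => (contDiffAt_pd21 (hpd2 j y hy)).differentiableAt one_ne_zero
  have dInt : ∀ y ∈ Ω, DifferentiableAt ℝ (fun z => ∫ s in (0:ℝ)..(u z), f s) y := by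
    intro y hy
    exact ((hfc.integral_hasStrictDerivAt 0 (u y)).hasDerivAt.comp_hasFDerivAt y
      (du y hy).hasFDerivAt).differentiableAt
  have dfu : ∀ y ∈ Ω, DifferentiableAt ℝ (fun z => f (u z)) y :=
    fun y hy => (hfd (u y)).comp y (du y hy)
  -- first derivatives of P on Ω
  have hPd : ∀ (k : Fin 2), ∀ y ∈ Ω, pd P k y =
      (∑ j, 2 * pd u j y * pd (pd u j) k y) + 2 * (f (u y) * pd u k y) := by
    intro k y hy
    rw [hP]
    rw [pd_add (g := fun y => ∑ j, pd u j y ^ 2) (h := fun y => 2 * ∫ s in (0:ℝ)..(u y), f s)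
      (DifferentiableAt.fun_sum fun j _ => ((dw j y hy).pow 2)) ((dInt y hy).const_mul 2)]
    rw [pd_sum _ (fun j y => pd u j y ^ 2) (fun j _ => (dw j y hy).pow 2)]
    rw [pd_const_mul _ (dInt y hy)]
    rw [pd_integral hfc (du y hy)]
    congr 1
    exact Finset.sum_congr rfl fun j _ => pd_sq (dw j y hy)
  -- second derivatives of P at x
  have hG : ∀ (k : Fin 2), pd (pd P k) k x =
      (∑ j, (2 * pd (pd u j) k x * pd (pd u j) k x
        + 2 * pd u j x * pd (pd (pd u j) k) k x))
      + 2 * ((deriv f (u x) * pd u k x) * pd u k x + f (u x) * pd (pd u k) k x) := by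
    intro k
    have hev : pd P k =ᶠ[nhds x]
        fun y => (∑ j, 2 * pd u j y * pd (pd u j) k y) + 2 * (f (u y) * pd u k y) :=
      Filter.eventuallyEq_of_mem (hΩ.mem_nhds hx) (fun y hy => hPd k y hy)
    rw [pd_congr hev]
    rw [pd_add (g := fun y => ∑ j, 2 * pd u j y * pd (pd u j) k y)
      (h := fun y => 2 * (f (u y) * pd u k y)) (DifferentiableAt.fun_sum fun j _ => ((dw j x hx).const_mul 2).mul (dv j k x hx))
      (((dfu x hx).mul (dw k x hx)).const_mul 2)]
    rw [pd_sum _ (fun j y => 2 * pd u j y * pd (pd u j) k y)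
      (fun j _ => ((dw j x hx).const_mul 2).mul (dv j k x hx))]
    rw [pd_const_mul (g := fun y => f (u y) * pd u k y) _ ((dfu x hx).mul (dw k x hx))]
    rw [pd_mul (dfu x hx) (dw k x hx)]
    rw [pd_comp (hfd (u x)) (du x hx)]
    have hsum : ∀ j : Fin 2, pd (fun y => 2 * pd u j y * pd (pd u j) k y) k x
        = 2 * pd (pd u j) k x * pd (pd u j) k x
          + 2 * pd u j x * pd (pd (pd u j) k) k x := by
      intro j
      rw [pd_mul ((dw j x hx).const_mul 2) (dv j k x hx), pd_const_mul _ (dw j x hx)]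
    rw [Finset.sum_congr rfl fun j _ => hsum j]
  -- symmetry of second derivatives
  have hb : pd (pd u 1) 0 x = pd (pd u 0) 1 x := pd_comm (hu2 x hx)
  -- third derivative identity
  have hswap : ∀ i j : Fin 2, pd (pd (pd u i) i) j x = pd (pd (pd u j) i) i x := by
    intro i j
    have h1 : pd (pd (pd u i) i) j x = pd (pd (pd u i) j) i x := pd_comm (hpd2 i x hx)
    have hev2 : pd (pd u i) j =ᶠ[nhds x] pd (pd u j) i :=
      Filter.eventuallyEq_of_mem (hΩ.mem_nhds hx) fun y hy => pd_comm (hu2 y hy)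
    rw [h1, pd_congr hev2]
  have hT : ∀ jj : Fin 2, pd (pd (pd u 0) 0) jj x + pd (pd (pd u 1) 1) jj x
      = -(deriv f (u x) * pd u jj x) := by
    intro jj
    have hev3 : (fun y => pd (pd u 0) 0 y + pd (pd u 1) 1 y) =ᶠ[nhds x]
        fun y => -(f (u y)) := by
      refine Filter.eventuallyEq_of_mem (hΩ.mem_nhds hx) fun y hy => ?_
      have := heq y hy
      simp only [lap, Fin.sum_univ_two] at this
      linarith
    have h4 : pd (fun y => pd (pd u 0) 0 y + pd (pd u 1) 1 y) jj x
        = pd (pd (pd u 0) 0) jj x + pd (pd (pd u 1) 1) jj x :=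
      pd_add (dv 0 0 x hx) (dv 1 1 x hx)
    have h5 : pd (fun y => -(f (u y))) jj x = -(deriv f (u x) * pd u jj x) := by
      rw [pd_neg, pd_comp (hfd (u x)) (du x hx)]
    rw [← h4, pd_congr hev3, h5]
  have hT' : ∀ j : Fin 2, pd (pd (pd u j) 0) 0 x + pd (pd (pd u j) 1) 1 x
      = -(deriv f (u x) * pd u j x) := by
    intro j
    rw [← hswap 0 j, ← hswap 1 j]
    exact hT j
  -- the PDE at x
  have hpde := heq x hx
  simp only [lap, Fin.sum_univ_two] at hpde
  have hF : f (u x) = -(pd (pd u 0) 0 x + pd (pd u 1) 1 x) := by linarith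
  -- the Laplacian of P at x
  have hlapP : lap P x =
      2 * ((pd (pd u 0) 0 x)^2 + 2 * (pd (pd u 0) 1 x)^2 + (pd (pd u 1) 1 x)^2)
      + 2 * f (u x) * (pd (pd u 0) 0 x + pd (pd u 1) 1 x) := by
    simp only [lap, Fin.sum_univ_two]
    rw [hG 0, hG 1]
    simp only [Fin.sum_univ_two]
    rw [hb]
    linear_combination 2 * (pd u 0 x) * (hT' 0) + 2 * (pd u 1 x) * (hT' 1)
  -- assemble
  simp only [Fin.sum_univ_two] at hD ⊢
  rw [hlapP, hL 0 x, hL 1 x, hPd 0 x hx, hPd 1 x hx]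
  simp only [Fin.sum_univ_two]
  rw [hb, hF]
  field_simp
  ring
end
end

section
/- Let u be a C² solution of Δu + f(u) = 0 on an open set Ω ⊂ ℝ², and define P(x) = |∇u(x)|² + 2∫₀^{u(x)} f(s) ds. Then ΔP = 2 Σ_{i,j} u_{,ij}² − 2 f(u)² in Ω. -/
noncomputable section

namespace PfunAux

variable {n : ℕ}

lemma pd_eq_clm (w : EuclideanSpace ℝ (Fin n) → ℝ) (i : Fin n) :
    pd w i = fun x => ContinuousLinearMap.apply ℝ ℝ (EuclideanSpace.single i 1) (fderiv ℝ w x) :=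
  rfl

lemma contDiffOn_pd {m : ℕ} {w : EuclideanSpace ℝ (Fin n) → ℝ}
    {Ω : Set (EuclideanSpace ℝ (Fin n))} (hΩ : IsOpen Ω)
    (hw : ContDiffOn ℝ (m + 1 : ℕ) w Ω) (i : Fin n) : ContDiffOn ℝ m (pd w i) Ω := by
  rw [pd_eq_clm]
  exact (ContinuousLinearMap.apply ℝ ℝ (EuclideanSpace.single i 1)).contDiff.comp_contDiffOn
    (hw.fderiv_of_isOpen hΩ (m := m) (by norm_cast))

lemma pd_congr_nhds {a b : EuclideanSpace ℝ (Fin n) → ℝ} {x : EuclideanSpace ℝ (Fin n)}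
    (h : ∀ᶠ y in nhds x, a y = b y) (j : Fin n) : pd a j x = pd b j x := by
  unfold pd; rw [Filter.EventuallyEq.fderiv_eq h]

lemma pd_pd_eq {w : EuclideanSpace ℝ (Fin n) → ℝ} {x : EuclideanSpace ℝ (Fin n)}
    (hw : ContDiffAt ℝ 2 w x) (i j : Fin n) :
    pd (pd w i) j x = fderiv ℝ (fderiv ℝ w) x (EuclideanSpace.single j 1)
      (EuclideanSpace.single i 1) := by
  have hdf : DifferentiableAt ℝ (fderiv ℝ w) x :=
    (hw.fderiv_right (m := 1) (by norm_num)).differentiableAt (by norm_num)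
  have h := ((ContinuousLinearMap.apply ℝ ℝ
      (EuclideanSpace.single i 1)).hasFDerivAt.comp x hdf.hasFDerivAt).fderiv
  rw [pd, pd_eq_clm]
  rw [show (fun x => ContinuousLinearMap.apply ℝ ℝ (EuclideanSpace.single i 1) (fderiv ℝ w x))
      = (ContinuousLinearMap.apply ℝ ℝ (EuclideanSpace.single i 1)) ∘ (fderiv ℝ w) from rfl, h]
  rfl

lemma pd_comm {w : EuclideanSpace ℝ (Fin n) → ℝ} {x : EuclideanSpace ℝ (Fin n)}
    (hw : ContDiffAt ℝ 2 w x) (i j : Fin n) :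
    pd (pd w i) j x = pd (pd w j) i x := by
  rw [pd_pd_eq hw, pd_pd_eq hw]
  exact (hw.isSymmSndFDerivAt (by norm_num) _ _).symm

end PfunAux

open PfunAux in
/-- For a solution of `Δu + f(u) = 0` on an open set `Ω ⊆ ℝ²`, the P-function
`P = |∇u|² + 2∫₀ᵘ f` satisfies `ΔP = 2 Σ u_{,ij}² − 2 f(u)²` in `Ω`. -/
theorem stmt4 (Ω : Set (EuclideanSpace ℝ (Fin 2))) (hΩ : IsOpen Ω)
    (f : ℝ → ℝ) (hf : ContDiff ℝ 1 f)
    (u : EuclideanSpace ℝ (Fin 2) → ℝ) (hu : ContDiffOn ℝ 3 u Ω)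
    (heq : ∀ x ∈ Ω, lap u x + f (u x) = 0)
    (P : EuclideanSpace ℝ (Fin 2) → ℝ)
    (hP : P = fun x => (∑ i, (pd u i x) ^ 2) + 2 * ∫ s in (0:ℝ)..(u x), f s) :
    ∀ x ∈ Ω, lap P x = 2 * (∑ i, ∑ j, (pd (pd u i) j x) ^ 2) - 2 * (f (u x)) ^ 2 := by
  intro x hx
  subst hP
  have hmem : Ω ∈ nhds x := hΩ.mem_nhds hx
  have hu' : ContDiffOn ℝ ((2 + 1 : ℕ) : ℕ∞) u Ω := by exact_mod_cast hu
  have huC : ∀ y ∈ Ω, ContDiffAt ℝ 3 u y := fun y hy => hu.contDiffAt (hΩ.mem_nhds hy)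
  have hv2 : ∀ i, ContDiffOn ℝ 2 (pd u i) Ω := fun i => by
    exact_mod_cast contDiffOn_pd hΩ (m := 2) hu' i
  have hv2' : ∀ i, ContDiffOn ℝ ((1 + 1 : ℕ) : ℕ∞) (pd u i) Ω := fun i => by
    exact_mod_cast hv2 i
  have hw1 : ∀ i j, ContDiffOn ℝ 1 (pd (pd u i) j) Ω := fun i j => by
    exact_mod_cast contDiffOn_pd hΩ (m := 1) (hv2' i) j
  have hud : ∀ y ∈ Ω, DifferentiableAt ℝ u y := fun y hy =>
    (huC y hy).differentiableAt (by norm_num)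
  have hvd : ∀ i, ∀ y ∈ Ω, DifferentiableAt ℝ (pd u i) y := fun i y hy =>
    ((hv2 i).contDiffAt (hΩ.mem_nhds hy)).differentiableAt (by norm_num)
  have hwd : ∀ i j, ∀ y ∈ Ω, DifferentiableAt ℝ (pd (pd u i) j) y := fun i j y hy =>
    ((hw1 i j).contDiffAt (hΩ.mem_nhds hy)).differentiableAt (by norm_num)
  have hfd : ∀ t, DifferentiableAt ℝ f t := fun t => hf.differentiable (by norm_num) t
  have hF : ∀ t : ℝ, HasDerivAt (fun r => ∫ s in (0:ℝ)..r, f s) (f t) t := fun t =>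
    (hf.continuous.integral_hasStrictDerivAt 0 t).hasDerivAt
  -- Step 1: first derivatives of P on Ω
  have hPd : ∀ y ∈ Ω, ∀ j,
      pd (fun z => (∑ i, (pd u i z) ^ 2) + 2 * ∫ s in (0:ℝ)..(u z), f s) j y
      = (∑ i, 2 * pd u i y * pd (pd u i) j y) + 2 * f (u y) * pd u j y := by
    intro y hy j
    have hg : HasFDerivAt (fun z => ∑ i, (pd u i z) ^ 2)
        (∑ i, (2 * pd u i y) • fderiv ℝ (pd u i) y) y := by
      apply HasFDerivAt.fun_sum
      intro i _
      have h1 := (hvd i y hy).hasFDerivAt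
      have h2 := h1.fun_mul h1
      have h3 : (2 * pd u i y) • fderiv ℝ (pd u i) y
          = (pd u i y) • fderiv ℝ (pd u i) y + (pd u i y) • fderiv ℝ (pd u i) y := by
        rw [two_mul, add_smul]
      rw [h3]
      simpa only [pow_two] using h2
    have hh : HasFDerivAt (fun z => 2 * ∫ s in (0:ℝ)..(u z), f s)
        ((2 * f (u y)) • fderiv ℝ u y) y := by
      have h1 := ((hF (u y)).comp_hasFDerivAt y (hud y hy).hasFDerivAt).const_mul (2:ℝ)
      rwa [smul_smul] at h1
    have hsum := (hg.fun_add hh).fderiv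
    show fderiv ℝ _ y (EuclideanSpace.single j 1) = _
    rw [hsum]
    simp [pd, ContinuousLinearMap.add_apply, ContinuousLinearMap.sum_apply, smul_eq_mul]
  -- Step 2: key identity  Σ_j ∂_j∂_j∂_i u = -(f'(u) ∂_i u)
  have key : ∀ i, (∑ j, pd (pd (pd u i) j) j x) = -(deriv f (u x) * pd u i x) := by
    intro i
    have h1 : pd (lap u) i x = ∑ j, pd (pd (pd u j) j) i x := by
      show fderiv ℝ (fun y => ∑ j, pd (pd u j) j y) x (EuclideanSpace.single i 1) = _
      rw [fderiv_fun_sum (fun j _ => hwd j j x hx)]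
      simp [pd, ContinuousLinearMap.sum_apply]
    have h2 : ∀ j, pd (pd (pd u j) j) i x = pd (pd (pd u i) j) j x := by
      intro j
      have hvx : ContDiffAt ℝ 2 (pd u j) x := (hv2 j).contDiffAt hmem
      rw [pd_comm hvx j i]
      apply pd_congr_nhds
      filter_upwards [hmem] with y hy
      exact (pd_comm ((huC y hy).of_le (by norm_num)) i j).symm
    have h3 : pd (lap u) i x = pd (fun y => -(f (u y))) i x := by
      apply pd_congr_nhds
      filter_upwards [hmem] with y hy
      have h := heq y hy; linarith
    have h4 : pd (fun y => -(f (u y))) i x = -(deriv f (u x) * pd u i x) := by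
      have hc : HasFDerivAt (fun y => -(f (u y)))
          (-(deriv f (u x) • fderiv ℝ u x)) x :=
        (((hfd (u x)).hasDerivAt).comp_hasFDerivAt x (hud x hx).hasFDerivAt).neg
      show fderiv ℝ _ x (EuclideanSpace.single i 1) = _
      rw [hc.fderiv]
      simp [pd, smul_eq_mul]
    calc ∑ j, pd (pd (pd u i) j) j x = ∑ j, pd (pd (pd u j) j) i x :=
          Finset.sum_congr rfl (fun j _ => (h2 j).symm)
      _ = pd (lap u) i x := h1.symm
      _ = -(deriv f (u x) * pd u i x) := h3.trans h4
  -- Step 3: second derivatives of P at x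
  have hQ : ∀ j, pd (pd (fun z => (∑ i, (pd u i z) ^ 2)
        + 2 * ∫ s in (0:ℝ)..(u z), f s) j) j x
      = (∑ i, (2 * (pd (pd u i) j x) ^ 2 + 2 * pd u i x * pd (pd (pd u i) j) j x))
        + (2 * (deriv f (u x) * pd u j x) * pd u j x + 2 * f (u x) * pd (pd u j) j x) := by
    intro j
    have e1 : pd (pd (fun z => (∑ i, (pd u i z) ^ 2)
        + 2 * ∫ s in (0:ℝ)..(u z), f s) j) j x
        = pd (fun y => (∑ i, 2 * pd u i y * pd (pd u i) j y) + 2 * f (u y) * pd u j y) j x := by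
      apply pd_congr_nhds
      filter_upwards [hmem] with y hy
      exact hPd y hy j
    rw [e1]
    have hprod : ∀ i : Fin 2, HasFDerivAt (fun y => 2 * pd u i y * pd (pd u i) j y)
        ((2 * pd u i x) • fderiv ℝ (pd (pd u i) j) x
          + (pd (pd u i) j x) • ((2:ℝ) • fderiv ℝ (pd u i) x)) x := fun i =>
      ((hvd i x hx).hasFDerivAt.const_mul (2:ℝ)).mul (hwd i j x hx).hasFDerivAt
    have hB : HasFDerivAt (fun y => 2 * f (u y) * pd u j y)
        ((2 * f (u x)) • fderiv ℝ (pd u j) x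
          + (pd u j x) • ((2:ℝ) • (deriv f (u x) • fderiv ℝ u x))) x :=
      ((((hfd (u x)).hasDerivAt).comp_hasFDerivAt x
        (hud x hx).hasFDerivAt).const_mul (2:ℝ)).mul (hvd j x hx).hasFDerivAt
    have htot := ((HasFDerivAt.fun_sum (fun i (_ : i ∈ Finset.univ) => hprod i)).fun_add hB).fderiv
    show fderiv ℝ _ x (EuclideanSpace.single j 1) = _
    rw [htot]
    simp only [ContinuousLinearMap.add_apply, ContinuousLinearMap.sum_apply,
      ContinuousLinearMap.coe_smul', Pi.smul_apply, smul_eq_mul, pd]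
    simp only [Fin.sum_univ_two]
    ring
  -- Step 4: assemble
  have heq' : pd (pd u 0) 0 x + pd (pd u 1) 1 x = -(f (u x)) := by
    have := heq x hx
    unfold lap at this
    rw [Fin.sum_univ_two] at this
    linarith
  show (∑ j, pd (pd (fun z => (∑ i, (pd u i z) ^ 2)
      + 2 * ∫ s in (0:ℝ)..(u z), f s) j) j x) = _
  rw [Fin.sum_univ_two, hQ 0, hQ 1]
  have k0 := key 0
  have k1 := key 1
  rw [Fin.sum_univ_two] at k0 k1
  simp only [Fin.sum_univ_two]
  linear_combination 2 * pd u 0 x * k0 + 2 * pd u 1 x * k1 + 2 * f (u x) * heq'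
end
end
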